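/- If each branch's choice function satisfies IRC, substitutability, and the law of aggregate demand, then the cumulative offer mechanism is strategy-proof: no agent can obtain a strictly preferred contract by misreporting her preference. -/

import Mathlib

open Finset
variable {I B X : Type*} [DecidableEq I] [DecidableEq B] [DecidableEq X] [Fintype X]

/-- Contracts currently held by the branches: from the cumulative offer set `A`,
each branch holds its choice from the offers addressed to it. -/
noncomputable def held (br : X → B) (C : B → Finset X → Finset X) (A : Finset X) : Finset X :=
  A.filter (fun x => x ∈ C (br x) (A.filter (fun y => br y = br x)))

/-- Agent `i` has no currently held contract. -/
noncomputable def FreeAgent (ag : X → I) (br : X → B) (C : B → Finset X → Finset X)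
    (A : Finset X) (i : I) : Prop :=
  ∀ x ∈ held br C A, ag x ≠ i

/-- Contract `x` is a valid next proposal at cumulative offer set `A`: its agent is
free, `x` is acceptable, not yet proposed, and most preferred among the agent's
acceptable not-yet-proposed contracts (`none` is the outside option; higher
`P`-value = more preferred). -/
noncomputable def Proposable (ag : X → I) (br : X → B) (C : B → Finset X → Finset X)
    (P : I → Option X → ℕ) (A : Finset X) (x : X) : Prop :=
  x ∉ A ∧ P (ag x) none < P (ag x) (some x) ∧ FreeAgent ag br C A (ag x) ∧
    ∀ y : X, ag y = ag x → y ∉ A → P (ag y) none < P (ag y) (some y) →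
      P (ag x) (some y) ≤ P (ag x) (some x)

/-- A policy resolving the arbitrary choice of proposer: it returns a valid proposal
whenever one exists, and `none` exactly when no agent can propose. -/
noncomputable def ValidPolicy (ag : X → I) (br : X → B) (C : B → Finset X → Finset X)
    (P : I → Option X → ℕ) (pol : Finset X → Option X) : Prop :=
  ∀ A : Finset X, (∀ x, pol A = some x → Proposable ag br C P A x) ∧
    (pol A = none → ∀ x, ¬ Proposable ag br C P A x)

/-- The cumulative offer process: starting from offer set `A`, repeatedly add the
proposal chosen by the policy (fuel-indexed; `Fintype.card X + 1` steps suffice). -/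
noncomputable def cop (pol : Finset X → Option X) : ℕ → Finset X → Finset X
  | 0, A => A
  | n + 1, A =>
    match pol A with
    | none => A
    | some x => cop pol n (insert x A)

/-- The outcome of the cumulative offer process. -/
noncomputable def outcome (br : X → B) (C : B → Finset X → Finset X)
    (pol : Finset X → Option X) : Finset X :=
  held br C (cop pol (Fintype.card X + 1) ∅)

/-- Irrelevance of rejected contracts. -/
def IRCb (Cb : Finset X → Finset X) : Prop :=
  ∀ (Y : Finset X) (z : X), z ∉ Y → z ∉ Cb (insert z Y) → Cb Y = Cb (insert z Y)

/-- Substitutability. -/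
def Substb (Cb : Finset X → Finset X) : Prop :=
  ∀ (Y : Finset X) (z z' : X), z ∉ Cb (insert z Y) → z ∉ Cb (insert z' (insert z Y))

/-- Law of aggregate demand. -/
def LADb (Cb : Finset X → Finset X) : Prop :=
  ∀ Y Y' : Finset X, Y ⊆ Y' → (Cb Y).card ≤ (Cb Y').card


/-- Agent `i`'s utility from outcome `Z` under true preference `P i`: the value of
her assignment (her contract in `Z`, or the outside option). -/
noncomputable def util (ag : X → I) (P : I → Option X → ℕ) (i : I) (Z : Finset X) : ℕ :=
  max (P i none) ((Z.filter (fun x => ag x = i)).sup (fun x => P i (some x)))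

/-! ### Auxiliary lemmas -/

section AuxChoice

variable {Cb : Finset X → Finset X}

private lemma reject_mono_aux (hsub : Substb Cb) :
    ∀ (n : ℕ) {S T : Finset X}, (T \ S).card = n → S ⊆ T → ∀ {z : X}, z ∈ S → z ∉ Cb S →
      z ∉ Cb T := by
  intro n
  induction n with
  | zero =>
    intro S T hc hST z hz hr
    have hTS : T = S := by
      apply Finset.Subset.antisymm _ hST
      intro a ha
      by_contra h
      have : a ∈ T \ S := Finset.mem_sdiff.mpr ⟨ha, h⟩
      rw [Finset.card_eq_zero.mp hc] at this
      simp at this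
    rwa [hTS]
  | succ n ih =>
    intro S T hc hST z hz hr
    obtain ⟨a, ha⟩ : (T \ S).Nonempty := by rw [← Finset.card_pos, hc]; omega
    have haT := (Finset.mem_sdiff.mp ha).1
    have haS := (Finset.mem_sdiff.mp ha).2
    have hSe : S ⊆ T.erase a := fun u hu => Finset.mem_erase.mpr ⟨fun h => haS (h ▸ hu), hST hu⟩
    have hce : ((T.erase a) \ S).card = n := by
      have heq : (T.erase a) \ S = (T \ S).erase a := by
        ext u
        simp only [Finset.mem_erase, Finset.mem_sdiff]
        tauto
      rw [heq, Finset.card_erase_of_mem ha, hc]; omega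
    have h2 := ih hce hSe hz hr
    have hzT : z ∈ T.erase a := hSe hz
    have hrw : insert z ((T.erase a).erase z) = T.erase a := Finset.insert_erase hzT
    have h3 := hsub ((T.erase a).erase z) z a (by rwa [hrw])
    rw [hrw, Finset.insert_erase haT] at h3
    exact h3

lemma reject_mono (hsub : Substb Cb) {S T : Finset X} (hST : S ⊆ T) {z : X}
    (hz : z ∈ S) (hr : z ∉ Cb S) : z ∉ Cb T :=
  reject_mono_aux hsub _ rfl hST hz hr

lemma choose_down (hsub : Substb Cb) {S T : Finset X} (hST : S ⊆ T) {z : X}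
    (hz : z ∈ S) (hc : z ∈ Cb T) : z ∈ Cb S := by
  by_contra h
  exact reject_mono hsub hST hz h hc

private lemma irc_eq_aux (hirc : IRCb Cb) :
    ∀ (n : ℕ) {U T : Finset X}, (T \ U).card = n → Cb T ⊆ U → U ⊆ T → Cb U = Cb T := by
  intro n
  induction n with
  | zero =>
    intro U T hc h1 h2
    have hTU : T = U := by
      apply Finset.Subset.antisymm _ h2
      intro a ha
      by_contra h
      have : a ∈ T \ U := Finset.mem_sdiff.mpr ⟨ha, h⟩
      rw [Finset.card_eq_zero.mp hc] at this
      simp at this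
    rw [hTU]
  | succ n ih =>
    intro U T hc h1 h2
    obtain ⟨a, ha⟩ : (T \ U).Nonempty := by rw [← Finset.card_pos, hc]; omega
    have haT := (Finset.mem_sdiff.mp ha).1
    have haU := (Finset.mem_sdiff.mp ha).2
    have haC : a ∉ Cb T := fun h => haU (h1 h)
    have key : Cb (T.erase a) = Cb T := by
      have := hirc (T.erase a) a (Finset.notMem_erase a T)
        (by rwa [Finset.insert_erase haT])
      rw [this, Finset.insert_erase haT]
    have hUe : U ⊆ T.erase a := fun u hu =>
      Finset.mem_erase.mpr ⟨fun h => haU (h ▸ hu), h2 hu⟩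
    have hce : ((T.erase a) \ U).card = n := by
      have heq : (T.erase a) \ U = (T \ U).erase a := by
        ext u
        simp only [Finset.mem_erase, Finset.mem_sdiff]
        tauto
      rw [heq, Finset.card_erase_of_mem ha, hc]; omega
    have := ih hce (by rw [key]; exact h1) hUe
    rw [this, key]

lemma irc_eq (hirc : IRCb Cb) {U T : Finset X} (h1 : Cb T ⊆ U) (h2 : U ⊆ T) :
    Cb U = Cb T :=
  irc_eq_aux hirc _ rfl h1 h2

end AuxChoice

set_option linter.unusedSectionVars false

section AuxRun

variable (ag : X → I) (br : X → B) (C : B → Finset X → Finset X)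

lemma mem_held {A : Finset X} {z : X} :
    z ∈ held br C A ↔ z ∈ A ∧ z ∈ C (br z) (A.filter (fun y => br y = br z)) := by
  unfold held
  exact Finset.mem_filter

lemma held_subset {A : Finset X} : held br C A ⊆ A := Finset.filter_subset _ _

lemma held_insert (hsub : ∀ b, Substb (C b)) {A : Finset X} {v : X} (hv : v ∉ A) :
    held br C (insert v A) ⊆ insert v (held br C A) := by
  intro z hz
  obtain ⟨hz1, hz2⟩ := (mem_held br C).mp hz
  by_cases hzv : z = v
  · exact hzv ▸ Finset.mem_insert_self _ _
  have hzA : z ∈ A := (Finset.mem_insert.mp hz1).resolve_left hzv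
  apply Finset.mem_insert_of_mem
  rw [(mem_held br C)]
  refine ⟨hzA, ?_⟩
  by_cases hb : br v = br z
  · have hfi : (insert v A).filter (fun y => br y = br z)
        = insert v (A.filter (fun y => br y = br z)) := by
      rw [Finset.filter_insert, if_pos hb]
    rw [hfi] at hz2
    exact choose_down (hsub (br z)) (Finset.subset_insert _ _)
      (Finset.mem_filter.mpr ⟨hzA, rfl⟩) hz2
  · have hfi : (insert v A).filter (fun y => br y = br z)
        = A.filter (fun y => br y = br z) := by
      rw [Finset.filter_insert, if_neg hb]
    rwa [hfi] at hz2

/-- Basic invariant of a run state: all proposed contracts are acceptable, and each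
agent holds at most one contract. -/
def BasicInv (π : I → Option X → ℕ) (A : Finset X) : Prop :=
  (∀ z ∈ A, π (ag z) none < π (ag z) (some z)) ∧
  (∀ z ∈ held br C A, ∀ w ∈ held br C A, ag z = ag w → z = w)

/-- Top-segment invariant: any acceptable unproposed contract is strictly worse than
every proposed contract of the same agent. -/
def SegInv (π : I → Option X → ℕ) (A : Finset X) : Prop :=
  ∀ z ∈ A, ∀ w : X, ag w = ag z → w ∉ A → π (ag w) none < π (ag w) (some w) →
    π (ag z) (some w) < π (ag z) (some z)

lemma basic_empty (π : I → Option X → ℕ) : BasicInv ag br C π ∅ := by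
  constructor
  · intro z hz; simp at hz
  · intro z hz; have := held_subset (br := br) (C := C) hz; simp at this

lemma seg_empty (π : I → Option X → ℕ) : SegInv ag π ∅ := by
  intro z hz; simp at hz

lemma basic_step (hsub : ∀ b, Substb (C b)) (π : I → Option X → ℕ) {A : Finset X} {v : X}
    (hB : BasicInv ag br C π A) (hv : Proposable ag br C π A v) :
    BasicInv ag br C π (insert v A) := by
  obtain ⟨hv1, hv2, hv3, hv4⟩ := hv
  constructor
  · intro z hz
    rcases Finset.mem_insert.mp hz with rfl | hz
    · exact hv2
    · exact hB.1 z hz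
  · intro z hz w hw hag
    have hz' := held_insert br C hsub hv1 hz
    have hw' := held_insert br C hsub hv1 hw
    rcases Finset.mem_insert.mp hz' with h1 | hz''
    · rcases Finset.mem_insert.mp hw' with h2 | hw''
      · rw [h1, h2]
      · exact absurd (by rw [← hag, h1] : ag w = ag v) (hv3 w hw'')
    · rcases Finset.mem_insert.mp hw' with h2 | hw''
      · exact absurd (by rw [hag, h2] : ag z = ag v) (hv3 z hz'')
      · exact hB.2 z hz'' w hw'' hag

lemma seg_step (π : I → Option X → ℕ)
    (hinj : ∀ w v : X, ag w = ag v → π (ag v) none < π (ag v) (some w) →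
      π (ag v) none < π (ag v) (some v) → π (ag v) (some w) = π (ag v) (some v) → w = v)
    {A : Finset X} {v : X}
    (hS : SegInv ag π A) (hv : Proposable ag br C π A v) :
    SegInv ag π (insert v A) := by
  obtain ⟨hv1, hv2, hv3, hv4⟩ := hv
  intro z hz w hagw hwA haccw
  have hwA' : w ∉ A := fun h => hwA (Finset.mem_insert_of_mem h)
  have hwv : w ≠ v := fun h => hwA (h ▸ Finset.mem_insert_self _ _)
  rcases Finset.mem_insert.mp hz with rfl | hz
  · have hle := hv4 w hagw hwA' (by rwa [hagw] at haccw ⊢)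
    rcases lt_or_eq_of_le hle with h | h
    · exact h
    · exact absurd (hinj w z hagw (by rw [← hagw]; exact hagw ▸ (h ▸ hv2)) hv2 h) hwv
  · exact hS z hz w hagw hwA' haccw

end AuxRun

section AuxCop

variable (ag : X → I) (br : X → B) (C : B → Finset X → Finset X)

lemma cop_succ_none {pol : Finset X → Option X} {n : ℕ} {A : Finset X}
    (h : pol A = none) : cop pol (n + 1) A = A := by
  simp [cop, h]

lemma cop_succ_some {pol : Finset X → Option X} {n : ℕ} {A : Finset X} {v : X}
    (h : pol A = some v) : cop pol (n + 1) A = cop pol n (insert v A) := by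
  simp [cop, h]

lemma cop_inv {π : I → Option X → ℕ} {pol : Finset X → Option X}
    (hpol : ValidPolicy ag br C π pol) (Pr : Finset X → Prop)
    (hstep : ∀ A v, Pr A → Proposable ag br C π A v → Pr (insert v A)) :
    ∀ (n : ℕ) (A : Finset X), Pr A → Pr (cop pol n A) := by
  intro n
  induction n with
  | zero => intro A h; exact h
  | succ n ih =>
    intro A h
    cases hp : pol A with
    | none => rwa [cop_succ_none hp]
    | some v =>
      rw [cop_succ_some hp]
      exact ih _ (hstep A v h ((hpol A).1 v hp))

lemma cop_final {π : I → Option X → ℕ} {pol : Finset X → Option X}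
    (hpol : ValidPolicy ag br C π pol) :
    ∀ (n : ℕ) (A : Finset X), Fintype.card X < n + A.card → pol (cop pol n A) = none := by
  intro n
  induction n with
  | zero =>
    intro A h
    have := Finset.card_le_univ A
    omega
  | succ n ih =>
    intro A h
    cases hp : pol A with
    | none => rwa [cop_succ_none hp]
    | some v =>
      rw [cop_succ_some hp]
      have hv := (hpol A).1 v hp
      apply ih
      rw [Finset.card_insert_of_notMem hv.1]
      omega

lemma final_noprop {π : I → Option X → ℕ} {pol : Finset X → Option X}
    (hpol : ValidPolicy ag br C π pol) :
    ∀ v, ¬ Proposable ag br C π (cop pol (Fintype.card X + 1) ∅) v := by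
  have h0 : pol (cop pol (Fintype.card X + 1) ∅) = none := by
    apply cop_final ag br C hpol
    simp
  exact (hpol _).2 h0

open Classical in
/-- A canonical valid policy, for any preference profile. -/
noncomputable def greedyPol (π : I → Option X → ℕ) : Finset X → Option X :=
  fun A => if h : ∃ z, Proposable ag br C π A z then some h.choose else none

lemma greedyPol_valid (π : I → Option X → ℕ) : ValidPolicy ag br C π (greedyPol ag br C π) := by
  intro A
  constructor
  · intro z hz
    unfold greedyPol at hz
    split at hz
    · next h =>
      have hspec := h.choose_spec
      have : h.choose = z := by injection hz
      rwa [this] at hspec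
    · simp at hz
  · intro h0 z hz
    unfold greedyPol at h0
    split at h0
    · simp at h0
    · next h => exact h ⟨z, hz⟩

lemma free_exhausted {π : I → Option X → ℕ} {F : Finset X}
    (hnp : ∀ v, ¬ Proposable ag br C π F v) {j : I}
    (hfree : FreeAgent ag br C F j) {w : X} (hw : ag w = j)
    (hacc : π j none < π j (some w)) : w ∈ F := by
  by_contra hwF
  classical
  set S := Finset.univ.filter (fun y => ag y = j ∧ y ∉ F ∧ π j none < π j (some y)) with hS
  have hne : S.Nonempty := ⟨w, by simp [hS, hw, hwF, hacc]⟩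
  obtain ⟨m, hm, hmax⟩ := S.exists_max_image (fun y => π j (some y)) hne
  simp only [hS, Finset.mem_filter, Finset.mem_univ, true_and] at hm
  obtain ⟨hm1, hm2, hm3⟩ := hm
  apply hnp m
  refine ⟨hm2, by rw [hm1]; exact hm3, by rw [hm1]; exact hfree, ?_⟩
  intro y hy1 hy2 hy3
  have hyS : y ∈ S := by
    simp only [hS, Finset.mem_filter, Finset.mem_univ, true_and]
    exact ⟨by rw [hy1, hm1], hy2, by rw [← (by rw [hy1, hm1] : ag y = j)]; exact hy3⟩
  have := hmax y hyS
  rw [hm1]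
  exact this

end AuxCop

section AuxMain

variable (ag : X → I) (br : X → B) (C : B → Finset X → Finset X)

lemma subset_run_step (hsub : ∀ b, Substb (C b)) (i : I) (π π' : I → Option X → ℕ)
    (hagree : ∀ j, j ≠ i → π' j = π j)
    {F : Finset X}
    (hG1 : ∀ z ∈ F, π (ag z) none < π (ag z) (some z))
    (hSeg : SegInv ag π F)
    (hnp : ∀ v, ¬ Proposable ag br C π F v)
    (h_i : ∀ v : X, ag v = i → π' i none < π' i (some v) → v ∈ F)
    {A : Finset X} {v : X} (hA : A ⊆ F) (hv : Proposable ag br C π' A v) :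
    insert v A ⊆ F := by
  obtain ⟨hv1, hv2, hv3, hv4⟩ := hv
  have hvF : v ∈ F := by
    by_cases hi : ag v = i
    · exact h_i v hi (by rw [← hi]; exact hv2)
    · have hπ : π' (ag v) = π (ag v) := hagree _ hi
      by_cases hheld : ∃ z ∈ held br C F, ag z = ag v
      · obtain ⟨z, hzH, hzag⟩ := hheld
        have hzF : z ∈ F := held_subset br C hzH
        have hπz : π' (ag z) = π (ag z) := by rw [hzag]; exact hπ
        have hzA : z ∉ A := by
          intro hzA
          apply hv3 z _ hzag
          rw [mem_held br C]
          refine ⟨hzA, ?_⟩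
          have hzC := ((mem_held br C).mp hzH).2
          exact choose_down (hsub (br z)) (Finset.filter_subset_filter _ hA)
            (Finset.mem_filter.mpr ⟨hzA, rfl⟩) hzC
        have hzacc : π (ag z) none < π (ag z) (some z) := hG1 z hzF
        have hle := hv4 z hzag hzA (by rw [hπz]; exact hzacc)
        by_contra hvF
        have hlt := hSeg z hzF v hzag.symm hvF (by rw [← hπ]; exact hv2)
        rw [hzag] at hlt
        have hle' : π (ag v) (some z) ≤ π (ag v) (some v) := by rw [← hπ]; exact hle
        omega
      · have hfree : FreeAgent ag br C F (ag v) := fun u hu h => hheld ⟨u, hu, h⟩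
        exact free_exhausted ag br C hnp hfree rfl (by rw [← hπ]; exact hv2)
  exact Finset.insert_subset hvF hA

lemma subset_run (hsub : ∀ b, Substb (C b)) (i : I) (π π' : I → Option X → ℕ)
    (hagree : ∀ j, j ≠ i → π' j = π j)
    {F : Finset X}
    (hG1 : ∀ z ∈ F, π (ag z) none < π (ag z) (some z))
    (hSeg : SegInv ag π F)
    (hnp : ∀ v, ¬ Proposable ag br C π F v)
    (h_i : ∀ v : X, ag v = i → π' i none < π' i (some v) → v ∈ F)
    {pol' : Finset X → Option X} (hpol' : ValidPolicy ag br C π' pol') (n : ℕ) :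
    cop pol' n ∅ ⊆ F :=
  cop_inv ag br C hpol' (· ⊆ F)
    (fun _ v hA hv => subset_run_step ag br C hsub i π π' hagree hG1 hSeg hnp h_i hA hv)
    n ∅ (Finset.empty_subset F)

lemma held_eq_biUnion (hCb : ∀ b Y, C b Y ⊆ Y.filter (fun x => br x = b)) {A : Finset X}
    (s : Finset B) (hs : ∀ z ∈ A, br z ∈ s) :
    held br C A = s.biUnion (fun b => C b (A.filter (fun y => br y = b))) := by
  ext z
  simp only [mem_held br C, Finset.mem_biUnion]
  constructor
  · rintro ⟨hzA, hzC⟩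
    exact ⟨br z, hs z hzA, hzC⟩
  · rintro ⟨b, hb, hzC⟩
    have h1 := hCb b _ hzC
    rw [Finset.mem_filter] at h1
    obtain ⟨h2, h3⟩ := h1
    rw [Finset.mem_filter] at h2
    subst h3
    exact ⟨h2.1, hzC⟩

lemma held_card_mono (hCb : ∀ b Y, C b Y ⊆ Y.filter (fun x => br x = b))
    (hlad : ∀ b, LADb (C b)) {A A' : Finset X} (h : A ⊆ A') :
    (held br C A).card ≤ (held br C A').card := by
  classical
  set s := A'.image br with hs
  have hsA : ∀ z ∈ A, br z ∈ s := fun z hz => Finset.mem_image_of_mem br (h hz)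
  have hsA' : ∀ z ∈ A', br z ∈ s := fun z hz => Finset.mem_image_of_mem br hz
  have hdisj : ∀ (A₀ : Finset X), ∀ b₁ ∈ s, ∀ b₂ ∈ s, b₁ ≠ b₂ →
      Disjoint (C b₁ (A₀.filter (fun y => br y = b₁))) (C b₂ (A₀.filter (fun y => br y = b₂))) := by
    intro A₀ b₁ _ b₂ _ hne
    rw [Finset.disjoint_left]
    intro u hu1 hu2
    have h1 := (Finset.mem_filter.mp (hCb b₁ _ hu1)).2
    have h2 := (Finset.mem_filter.mp (hCb b₂ _ hu2)).2
    exact hne (by rw [← h1, ← h2])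
  rw [held_eq_biUnion br C hCb s hsA, held_eq_biUnion br C hCb s hsA']
  rw [Finset.card_biUnion (hdisj A), Finset.card_biUnion (hdisj A')]
  apply Finset.sum_le_sum
  intro b _
  exact hlad b _ _ (Finset.filter_subset_filter _ h)

end AuxMain
/-- Strategy-proofness of the cumulative offer mechanism: with IRC, substitutability
and LAD, no agent can obtain a strictly preferred assignment by misreporting. -/
theorem cop_strategyproof (ag : X → I) (br : X → B) (C : B → Finset X → Finset X)
    (P : I → Option X → ℕ) (i : I) (Q : Option X → ℕ)
    (hCb : ∀ b Y, C b Y ⊆ Y.filter (fun x => br x = b))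
    (hfeas : ∀ b Y, ∀ x ∈ C b Y, ∀ y ∈ C b Y, ag x = ag y → x = y)
    (hirc : ∀ b, IRCb (C b)) (hsub : ∀ b, Substb (C b)) (hlad : ∀ b, LADb (C b))
    (hP : ∀ j, Function.Injective (P j)) (hQ : Function.Injective Q)
    (pol pol' : Finset X → Option X)
    (hpol : ValidPolicy ag br C P pol)
    (hpol' : ValidPolicy ag br C (Function.update P i Q) pol') :
    util ag P i (outcome br C pol') ≤ util ag P i (outcome br C pol) := by
  classical
  unfold outcome
  set AP := cop pol (Fintype.card X + 1) ∅ with hAPdef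
  set AQ := cop pol' (Fintype.card X + 1) ∅ with hAQdef
  by_contra hcon
  push_neg at hcon
  set πQ := Function.update P i Q with hπQdef
  -- extract the contract `x` that `i` obtains by misreporting
  have hPnone_le : P i none ≤ util ag P i (held br C AP) := le_max_left _ _
  set S := (held br C AQ).filter (fun z => ag z = i) with hSdef
  have hSne : S.Nonempty := by
    by_contra hS
    rw [Finset.not_nonempty_iff_eq_empty] at hS
    have : util ag P i (held br C AQ) = max (P i none) (S.sup (fun z => P i (some z))) := rfl
    rw [hS] at this
    simp at this
    omega
  obtain ⟨x, hxS, hxsup⟩ := S.exists_mem_eq_sup hSne (fun z => P i (some z))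
  have hxQ : x ∈ held br C AQ := (Finset.mem_filter.mp hxS).1
  have hxag : ag x = i := (Finset.mem_filter.mp hxS).2
  have hQx : util ag P i (held br C AQ) = max (P i none) (P i (some x)) := by
    rw [← hxsup]; rfl
  have hxgt : util ag P i (held br C AP) < P i (some x) := by
    rcases le_or_gt (P i (some x)) (P i none) with h | h
    · rw [hQx, max_eq_left h] at hcon; omega
    · rw [hQx, max_eq_right (le_of_lt h)] at hcon; exact hcon
  have hxaccP : P i none < P i (some x) := by omega
  -- the two auxiliary preference relations for agent `i`
  set R : Option X → ℕ := fun o => if o = some x then 1 else 0 with hRdef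
  set T : Option X → ℕ := fun o =>
    match o with
    | none => 0
    | some w => if P i (some x) ≤ P i (some w) ∧ P i none < P i (some w)
        then P i (some w) + 1 else 0 with hTdef
  set πR := Function.update P i R with hπRdef
  set πT := Function.update P i T with hπTdef
  have hRaccIff : ∀ w : X, (πR i none < πR i (some w)) ↔ w = x := by
    intro w
    rw [hπRdef, Function.update_self, hRdef]
    by_cases h : w = x
    · simp [h]
    · simp [h]
  have hTnone : πT i none = 0 := by rw [hπTdef, Function.update_self, hTdef]
  have hTsome : ∀ w : X, πT i (some w)
      = if P i (some x) ≤ P i (some w) ∧ P i none < P i (some w)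
        then P i (some w) + 1 else 0 := by
    intro w; rw [hπTdef, Function.update_self, hTdef]
  have hTaccIff : ∀ w : X, (πT i none < πT i (some w)) ↔
      (P i (some x) ≤ P i (some w) ∧ P i none < P i (some w)) := by
    intro w
    rw [hTnone, hTsome]
    by_cases h : P i (some x) ≤ P i (some w) ∧ P i none < P i (some w)
    · simp [h]
    · simp [h]
  -- policies for the auxiliary markets
  set polR := greedyPol ag br C πR with hpolRdef
  set polT := greedyPol ag br C πT with hpolTdef
  have hvR := greedyPol_valid ag br C πR
  have hvT := greedyPol_valid ag br C πT
  set FR := cop polR (Fintype.card X + 1) ∅ with hFRdef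
  set AT := cop polT (Fintype.card X + 1) ∅ with hATdef
  -- basic invariants for the four runs
  have hBQ : BasicInv ag br C πQ AQ :=
    cop_inv ag br C hpol' _ (fun A v h hv => basic_step ag br C hsub πQ h hv) _ ∅
      (basic_empty ag br C πQ)
  have hBR : BasicInv ag br C πR FR :=
    cop_inv ag br C hvR _ (fun A v h hv => basic_step ag br C hsub πR h hv) _ ∅
      (basic_empty ag br C πR)
  have hBT : BasicInv ag br C πT AT :=
    cop_inv ag br C hvT _ (fun A v h hv => basic_step ag br C hsub πT h hv) _ ∅
      (basic_empty ag br C πT)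
  have hinjQ : ∀ w v : X, ag w = ag v → πQ (ag v) none < πQ (ag v) (some w) →
      πQ (ag v) none < πQ (ag v) (some v) → πQ (ag v) (some w) = πQ (ag v) (some v) → w = v := by
    intro w v _ _ _ heq
    by_cases h : ag v = i
    · rw [h, hπQdef, Function.update_self] at heq
      exact Option.some_injective X (hQ heq)
    · rw [hπQdef, Function.update_of_ne h] at heq
      exact Option.some_injective X (hP (ag v) heq)
  have hinjT : ∀ w v : X, ag w = ag v → πT (ag v) none < πT (ag v) (some w) →
      πT (ag v) none < πT (ag v) (some v) → πT (ag v) (some w) = πT (ag v) (some v) → w = v := by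
    intro w v hag haccw haccv heq
    by_cases h : ag v = i
    · rw [h] at haccw haccv heq
      rw [hTaccIff] at haccw haccv
      rw [hTsome, hTsome, if_pos haccw, if_pos haccv] at heq
      have : P i (some w) = P i (some v) := by omega
      exact Option.some_injective X (hP i this)
    · rw [hπTdef, Function.update_of_ne h] at heq
      exact Option.some_injective X (hP (ag v) heq)
  have hinjP : ∀ w v : X, ag w = ag v → P (ag v) none < P (ag v) (some w) →
      P (ag v) none < P (ag v) (some v) → P (ag v) (some w) = P (ag v) (some v) → w = v :=
    fun w v _ _ _ heq => Option.some_injective X (hP _ heq)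
  have hSQ : SegInv ag πQ AQ :=
    cop_inv ag br C hpol' _ (fun A v h hv => seg_step ag br C πQ hinjQ h hv) _ ∅
      (seg_empty ag πQ)
  have hST : SegInv ag πT AT :=
    cop_inv ag br C hvT _ (fun A v h hv => seg_step ag br C πT hinjT h hv) _ ∅
      (seg_empty ag πT)
  have hnpQ := final_noprop ag br C hpol'
  have hnpR := final_noprop ag br C hvR
  have hnpT := final_noprop ag br C hvT
  have hnpP := final_noprop ag br C hpol
  -- Step B : in the singleton market, `i` obtains `x`.
  have hagreeRQ : ∀ j, j ≠ i → πR j = πQ j := by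
    intro j hj
    rw [hπRdef, hπQdef, Function.update_of_ne hj, Function.update_of_ne hj]
  have h_iRQ : ∀ v : X, ag v = i → πR i none < πR i (some v) → v ∈ AQ := by
    intro v _ hacc
    rw [hRaccIff] at hacc
    rw [hacc]
    exact held_subset br C hxQ
  have hFRQ : FR ⊆ AQ :=
    subset_run ag br C hsub i πQ πR hagreeRQ hBQ.1 hSQ hnpQ h_iRQ hvR _
  have hxFR : x ∈ FR := by
    by_contra hxFR
    apply hnpR x
    refine ⟨hxFR, by rw [hxag, hRaccIff], ?_, ?_⟩
    · intro u hu hagu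
      have huFR : u ∈ FR := held_subset br C hu
      have hacc := hBR.1 u huFR
      rw [hagu, hxag, hRaccIff] at hacc
      exact hxFR (hacc ▸ huFR)
    · intro y hy1 _ hy3
      have : πR (ag y) none < πR (ag y) (some y) := hy3
      rw [hy1, hxag, hRaccIff] at this
      rw [this]
  have hxFRheld : x ∈ held br C FR := by
    rw [mem_held br C]
    refine ⟨hxFR, ?_⟩
    exact choose_down (hsub (br x)) (Finset.filter_subset_filter _ hFRQ)
      (Finset.mem_filter.mpr ⟨hxFR, rfl⟩) ((mem_held br C).mp hxQ).2
  -- Bridge : in the truncation market, `i` is assigned.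
  have hziT : ∃ z ∈ held br C AT, ag z = i := by
    by_contra hno
    push_neg at hno
    have hfreeT : FreeAgent ag br C AT i := fun u hu => hno u hu
    have hxT : x ∈ AT := by
      apply free_exhausted ag br C hnpT hfreeT hxag
      rw [hTaccIff]
      exact ⟨le_refl _, hxaccP⟩
    have hagreeRT : ∀ j, j ≠ i → πR j = πT j := by
      intro j hj
      rw [hπRdef, hπTdef, Function.update_of_ne hj, Function.update_of_ne hj]
    have h_iRT : ∀ v : X, ag v = i → πR i none < πR i (some v) → v ∈ AT := by
      intro v _ hacc
      rw [hRaccIff] at hacc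
      rw [hacc]; exact hxT
    have hFRT : FR ⊆ AT :=
      subset_run ag br C hsub i πT πR hagreeRT hBT.1 hST hnpT h_iRT hvR _
    have himg : (held br C AT).image ag ⊆ ((held br C FR).image ag).erase i := by
      intro j hj
      obtain ⟨zT, hzT, rfl⟩ := Finset.mem_image.mp hj
      rw [Finset.mem_erase]
      refine ⟨hno zT hzT, ?_⟩
      rw [Finset.mem_image]
      by_contra hnoj
      push_neg at hnoj
      have hfreeRj : FreeAgent ag br C FR (ag zT) := fun u hu h => hnoj u hu h
      have hkne : ag zT ≠ i := hno zT hzT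
      have haccT := hBT.1 zT (held_subset br C hzT)
      rw [hπTdef, Function.update_of_ne hkne] at haccT
      have hzTFR : zT ∈ FR := by
        apply free_exhausted ag br C hnpR hfreeRj rfl
        rw [hπRdef, Function.update_of_ne hkne]
        exact haccT
      have hzTnot : zT ∉ C (br zT) (FR.filter (fun y => br y = br zT)) := by
        intro hc
        exact hnoj zT ((mem_held br C).mpr ⟨hzTFR, hc⟩) rfl
      have := reject_mono (hsub (br zT))
        (Finset.filter_subset_filter (fun y => br y = br zT) hFRT)
        (Finset.mem_filter.mpr ⟨hzTFR, rfl⟩) hzTnot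
      exact this ((mem_held br C).mp hzT).2
    have hinjAgT : Set.InjOn ag ↑(held br C AT) := fun a ha b hb hab =>
      hBT.2 a ha b hb hab
    have hinjAgR : Set.InjOn ag ↑(held br C FR) := fun a ha b hb hab =>
      hBR.2 a ha b hb hab
    have c1 : ((held br C AT).image ag).card = (held br C AT).card :=
      Finset.card_image_of_injOn hinjAgT
    have c5 : ((held br C FR).image ag).card = (held br C FR).card :=
      Finset.card_image_of_injOn hinjAgR
    have c2 : ((held br C AT).image ag).card ≤ (((held br C FR).image ag).erase i).card :=
      Finset.card_le_card himg
    have c3 : i ∈ (held br C FR).image ag :=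
      Finset.mem_image.mpr ⟨x, hxFRheld, hxag⟩
    have c4 : (((held br C FR).image ag).erase i).card = ((held br C FR).image ag).card - 1 :=
      Finset.card_erase_of_mem c3
    have c6 : (held br C FR).card ≤ (held br C AT).card :=
      held_card_mono br C hCb hlad hFRT
    have c7 : 0 < (held br C FR).card := Finset.card_pos.mpr ⟨x, hxFRheld⟩
    omega
  obtain ⟨zi, hziH, hziag⟩ := hziT
  have hziTacc : P i (some x) ≤ P i (some zi) ∧ P i none < P i (some zi) := by
    have := hBT.1 zi (held_subset br C hziH)
    rw [hziag, hTaccIff] at this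
    exact this
  -- Main argument : no contract of Z := held AT  is ever rejected along the true run.
  set Z := held br C AT with hZdef
  have haccTP : ∀ z ∈ Z, P (ag z) none < P (ag z) (some z) := by
    intro z hz
    have hacc := hBT.1 z (held_subset br C hz)
    by_cases hzi : ag z = i
    · rw [hzi] at hacc ⊢
      rw [hTaccIff] at hacc
      exact hacc.2
    · rwa [hπTdef, Function.update_of_ne hzi] at hacc
  set Inv1 : Finset X → Prop :=
    fun A => ∀ z ∈ Z, z ∈ A → z ∈ C (br z) (A.filter (fun y => br y = br z)) with hInv1def
  set Inv2 : Finset X → Prop :=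
    fun A => ∀ u ∈ A, ∀ z ∈ Z, ag z = ag u →
      P (ag u) (some z) ≤ P (ag u) (some u) with hInv2def
  have hstepJ : ∀ A v, (BasicInv ag br C P A ∧ Inv1 A ∧ Inv2 A) →
      Proposable ag br C P A v → (BasicInv ag br C P (insert v A) ∧
        Inv1 (insert v A) ∧ Inv2 (insert v A)) := by
    rintro A v ⟨hB, hI1, hI2⟩ hv
    have hB' := basic_step ag br C hsub P hB hv
    obtain ⟨hv1, hv2, hv3, hv4⟩ := hv
    have hI2' : Inv2 (insert v A) := by
      intro u hu z hz hagz
      rcases Finset.mem_insert.mp hu with rfl | hu'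
      · have hzA : z ∉ A := by
          intro hzA
          exact hv3 z ((mem_held br C).mpr ⟨hzA, hI1 z hz hzA⟩) hagz
        exact hv4 z hagz hzA (haccTP z hz)
      · exact hI2 u hu' z hz hagz
    refine ⟨hB', ?_, hI2'⟩
    intro z' hz'Z hz'A
    by_cases hb : br v = br z'
    · have hfi : (insert v A).filter (fun y => br y = br z')
          = insert v (A.filter (fun y => br y = br z')) := by
        rw [Finset.filter_insert, if_pos hb]
      rw [hfi]
      by_contra hrej
      set D := insert v (A.filter (fun y => br y = br z')) with hDdef
      have hDT : D ⊆ AT.filter (fun y => br y = br z') := by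
        intro u hu
        have huA : u ∈ insert v A := by
          rcases Finset.mem_insert.mp hu with h | h
          · exact h ▸ Finset.mem_insert_self _ _
          · exact Finset.mem_insert_of_mem (Finset.mem_filter.mp h).1
        have hubr : br u = br z' := by
          rcases Finset.mem_insert.mp hu with h | h
          · rw [h]; exact hb
          · exact (Finset.mem_filter.mp h).2
        have huacc : P (ag u) none < P (ag u) (some u) := hB'.1 u huA
        have huT : u ∈ AT := by
          by_cases hk : ∃ zk ∈ Z, ag zk = ag u
          · obtain ⟨zk, hzk, hzkag⟩ := hk
            have hle : P (ag u) (some zk) ≤ P (ag u) (some u) := hI2' u huA zk hzk hzkag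
            by_contra huT
            have haccTu : πT (ag u) none < πT (ag u) (some u) := by
              by_cases hki : ag u = i
              · rw [hki]
                rw [hTaccIff]
                have hzkzi : zk = zi := hBT.2 zk hzk zi hziH (by rw [hzkag, hki, hziag])
                refine ⟨le_trans hziTacc.1 ?_, by rw [← hki]; exact huacc⟩
                rw [← hzkzi]
                rw [hki] at hle
                exact hle
              · rw [hπTdef, Function.update_of_ne hki]
                exact huacc
            have hlt := hST zk (held_subset br C hzk) u hzkag.symm huT haccTu
            by_cases hki : ag u = i
            · rw [hzkag, hki] at hlt
              have hzkzi : zk = zi := hBT.2 zk hzk zi hziH (by rw [hzkag, hki, hziag])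
              have haccu' : P i (some x) ≤ P i (some u) ∧ P i none < P i (some u) := by
                rw [hki] at haccTu
                rw [hTaccIff] at haccTu
                exact haccTu
              have hacczk : P i (some x) ≤ P i (some zk) ∧ P i none < P i (some zk) := by
                rw [hzkzi]; exact hziTacc
              rw [hTsome, hTsome, if_pos haccu', if_pos hacczk] at hlt
              rw [hki] at hle
              omega
            · rw [hzkag, hπTdef, Function.update_of_ne hki] at hlt
              omega
          · have hki : ag u ≠ i := fun h => hk ⟨zi, hziH, by rw [hziag, h]⟩
            have hfreek : FreeAgent ag br C AT (ag u) := fun w hw hwag => hk ⟨w, hw, hwag⟩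
            apply free_exhausted ag br C hnpT hfreek rfl
            rw [hπTdef, Function.update_of_ne hki]
            exact huacc
        exact Finset.mem_filter.mpr ⟨huT, hubr⟩
      have hz'Zb : z' ∈ C (br z') (AT.filter (fun y => br y = br z')) :=
        ((mem_held br C).mp hz'Z).2
      have hz'D : z' ∈ D := by
        rcases Finset.mem_insert.mp hz'A with h | h
        · rw [hDdef, ← h]; exact Finset.mem_insert_self _ _
        · exact Finset.mem_insert_of_mem (Finset.mem_filter.mpr ⟨h, rfl⟩)
      have hCU : C (br z') (D ∪ C (br z') (AT.filter (fun y => br y = br z')))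
          = C (br z') (AT.filter (fun y => br y = br z')) := by
        apply irc_eq (hirc (br z'))
        · exact Finset.subset_union_right
        · exact Finset.union_subset hDT ((hCb _ _).trans (Finset.filter_subset _ _))
      have := reject_mono (hsub (br z'))
        (Finset.subset_union_left
          (s₂ := C (br z') (AT.filter (fun y => br y = br z')))) hz'D hrej
      rw [hCU] at this
      exact this hz'Zb
    · have hfi : (insert v A).filter (fun y => br y = br z')
          = A.filter (fun y => br y = br z') := by
        rw [Finset.filter_insert, if_neg hb]
      have hz'A' : z' ∈ A := by
        rcases Finset.mem_insert.mp hz'A with h | h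
        · exact absurd (by rw [h]) hb
        · exact h
      rw [hfi]
      exact hI1 z' hz'Z hz'A'
  have hJAP : BasicInv ag br C P AP ∧ Inv1 AP ∧ Inv2 AP := by
    apply cop_inv ag br C hpol _ hstepJ _ ∅
    refine ⟨basic_empty ag br C P, ?_, ?_⟩
    · intro z _ hz; simp at hz
    · intro u hu; simp at hu
  -- conclusion
  have hfin : P i (some zi) ≤ util ag P i (held br C AP) := by
    by_cases hz : zi ∈ AP
    · have hmem : zi ∈ held br C AP := (mem_held br C).mpr ⟨hz, hJAP.2.1 zi hziH hz⟩
      have hmemf : zi ∈ (held br C AP).filter (fun z => ag z = i) :=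
        Finset.mem_filter.mpr ⟨hmem, hziag⟩
      have : P i (some zi) ≤ ((held br C AP).filter (fun z => ag z = i)).sup
          (fun z => P i (some z)) :=
        Finset.le_sup (f := fun z => P i (some z)) hmemf
      exact le_trans this (le_max_right _ _)
    · by_cases hfree : FreeAgent ag br C AP i
      · exfalso
        apply hz
        apply free_exhausted ag br C hnpP hfree hziag
        have := haccTP zi hziH
        rwa [hziag] at this
      · rw [FreeAgent] at hfree
        push_neg at hfree
        obtain ⟨w, hw, hwag⟩ := hfree
        have h1 : P i (some zi) ≤ P i (some w) := by
          have := hJAP.2.2 w (held_subset br C hw) zi hziH (by rw [hziag, hwag])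
          rwa [hwag] at this
        have hmemf : w ∈ (held br C AP).filter (fun z => ag z = i) :=
          Finset.mem_filter.mpr ⟨hw, hwag⟩
        have h2 : P i (some w) ≤ ((held br C AP).filter (fun z => ag z = i)).sup
            (fun z => P i (some z)) :=
          Finset.le_sup (f := fun z => P i (some z)) hmemf
        exact le_trans h1 (le_trans h2 (le_max_right _ _))
  have := hziTacc.1
  omega
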